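/- Let L be an even unimodular lattice, M ⊂ L a primitive sublattice (L/M torsion-free) with nondegenerate restricted form, and N = M^⊥ in L. Then the image of L in M^∨/M × N^∨/N under the natural map x ↦ (x_M mod M, x_N mod N) is the graph of a group isomorphism M^∨/M ≅ N^∨/N. -/

import Mathlib

/-- For a bilinear form `B` on `L` and a submodule `M ≤ L`, the linear map sending
`x ∈ L` to the functional `m ↦ B x m` on `M` (the "projection to `M^∨`"). -/
def restrDual {L : Type*} [AddCommGroup L] [Module ℤ L]
    (B : L →ₗ[ℤ] L →ₗ[ℤ] ℤ) (M : Submodule ℤ L) : L →ₗ[ℤ] (M →ₗ[ℤ] ℤ) where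
  toFun x := (B x).domRestrict M
  map_add' x y := by ext m; simp
  map_smul' c x := by ext m; simp

lemma restrDual_apply {L : Type*} [AddCommGroup L] [Module ℤ L]
    (B : L →ₗ[ℤ] L →ₗ[ℤ] ℤ) (M : Submodule ℤ L) (x : L) (m : M) :
    restrDual B M x m = B x m := rfl

/-- Any two `ℤ`-module structures on an additive group coincide. -/
lemma intModuleEq {X : Type*} [AddCommGroup X] (a b : Module ℤ X) : a = b := by
  letI : Unique (Module ℤ X) := AddCommGroup.uniqueIntModule
  exact Subsingleton.elim a b

/-- The cokernel of an injective map from a finite free `ℤ`-module to its dual is torsion. -/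
lemma torCoker {V : Type*} [AddCommGroup V] [Module ℤ V] [Module.Free ℤ V] [Module.Finite ℤ V]
    (g : V →ₗ[ℤ] Module.Dual ℤ V) (hg : Function.Injective g) (φ : Module.Dual ℤ V) :
    ∃ k : ℤ, k ≠ 0 ∧ ∃ v : V, ∀ w : V, k * φ w = g v w := by
  have h1 := Submodule.rank_quotient_add_rank (LinearMap.range g)
  rw [rank_range_of_injective g hg] at h1
  have h2 : Module.rank ℤ (Module.Dual ℤ V) = Module.rank ℤ V := by
    rw [Module.dual_rank_eq]; simp
  rw [h2] at h1
  have hfin : Module.rank ℤ V < Cardinal.aleph0 := Module.rank_lt_aleph0 ℤ V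
  have h0 : Module.rank ℤ (Module.Dual ℤ V ⧸ LinearMap.range g) = 0 := by
    obtain ⟨n, hn⟩ := Cardinal.lt_aleph0.mp hfin
    rw [hn] at h1
    have := (Cardinal.add_nat_le_add_nat_iff n
      (α := Module.rank ℤ (Module.Dual ℤ V ⧸ LinearMap.range g)) (β := 0)).mp
      (by rw [zero_add]; exact le_of_eq h1)
    exact le_antisymm this (Cardinal.zero_le _)
  obtain ⟨k, hk, hk0⟩ := rank_eq_zero_iff.mp h0 (Submodule.Quotient.mk φ)
  refine ⟨k, hk, ?_⟩
  rw [← Submodule.Quotient.mk_smul, Submodule.Quotient.mk_eq_zero] at hk0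
  obtain ⟨v, hv⟩ := hk0
  refine ⟨v, fun w => ?_⟩
  have h3 := congrArg (fun f => f w) hv
  simpa [smul_eq_mul] using h3.symm

/-- If `L/M` is torsion-free, the projection `L → M^∨` is surjective for unimodular `B`. -/
lemma restrDual_surjective {L : Type*} [AddCommGroup L] [Module ℤ L]
    [Module.Free ℤ L] [Module.Finite ℤ L]
    (B : L →ₗ[ℤ] L →ₗ[ℤ] ℤ)
    (hunimod : ∀ φ : L →ₗ[ℤ] ℤ, ∃! x : L, ∀ y : L, φ y = B x y)
    (M : Submodule ℤ L)
    (hprim : ∀ (x : L) (k : ℤ), k ≠ 0 → k • x ∈ M → x ∈ M) :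
    Function.Surjective (restrDual B M) := by
  letI instQ : Module ℤ (L ⧸ M) := Submodule.Quotient.module M
  haveI hfinQ : @Module.Finite ℤ (L ⧸ M) _ _ instQ :=
    Module.Finite.of_surjective M.mkQ (Submodule.mkQ_surjective M)
  haveI h1nz : NoZeroSMulDivisors ℤ (L ⧸ M) := by
    refine ⟨fun {c x} h => ?_⟩
    by_cases hc : c = 0
    · exact Or.inl hc
    · refine Or.inr ?_
      obtain ⟨y, rfl⟩ := Submodule.mkQ_surjective M x
      have e : M.mkQ (c • y) = c • M.mkQ y := map_zsmul M.mkQ.toAddMonoidHom c y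
      rw [← e] at h
      have h2 : c • y ∈ M := by
        rw [Submodule.mkQ_apply, Submodule.Quotient.mk_eq_zero M] at h
        exact h
      exact (Submodule.Quotient.mk_eq_zero M).mpr (hprim y c hc h2)
  haveI h2fin : @Module.Finite ℤ (L ⧸ M) _ _ (AddCommGroup.toIntModule _) :=
    intModuleEq instQ (AddCommGroup.toIntModule _) ▸ hfinQ
  haveI h3free : @Module.Free ℤ (L ⧸ M) _ _ (AddCommGroup.toIntModule _) :=
    @Module.free_of_finite_type_torsion_free' ℤ _ (L ⧸ M) _ (AddCommGroup.toIntModule _) _ _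
      h2fin (by exact inferInstance)
  haveI hfreeQ : @Module.Free ℤ (L ⧸ M) _ _ instQ :=
    intModuleEq (AddCommGroup.toIntModule _) instQ ▸ h3free
  haveI hprojQ : @Module.Projective ℤ _ (L ⧸ M) _ instQ :=
    @Module.Projective.of_free ℤ _ (L ⧸ M) _ instQ hfreeQ
  obtain ⟨s, hs⟩ := @Module.projective_lifting_property ℤ _ (L ⧸ M) _ instQ L _ _
    (L ⧸ M) _ instQ hprojQ M.mkQ (@LinearMap.id ℤ (L ⧸ M) _ _ instQ)
    (Submodule.mkQ_surjective M)
  set p : L →ₗ[ℤ] L := LinearMap.id - s ∘ₗ M.mkQ with hp_def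
  have hsx : ∀ q : L ⧸ M, M.mkQ (s q) = q := by
    intro q
    have := congrArg (fun f => f q) hs
    simpa using this
  have hp : ∀ x : L, p x ∈ M := by
    intro x
    have h3 : M.mkQ (p x) = M.mkQ x - M.mkQ (s (M.mkQ x)) := by
      rw [hp_def]
      simp [map_sub]
    have h4 : M.mkQ (p x) = 0 := by rw [h3, hsx, sub_self]
    rwa [Submodule.mkQ_apply, Submodule.Quotient.mk_eq_zero] at h4
  have hpm : ∀ m : M, p (m : L) = (m : L) := by
    intro m
    have h0 : M.mkQ (m : L) = 0 := by
      rw [Submodule.mkQ_apply, Submodule.Quotient.mk_eq_zero]; exact m.2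
    rw [hp_def]
    simp only [LinearMap.sub_apply, LinearMap.id_apply, LinearMap.comp_apply, h0,
      map_zero, sub_zero]
  intro φ
  -- build the extension of φ to L by hand
  set φA : L →+ ℤ := AddMonoidHom.mk' (fun x => φ ⟨p x, hp x⟩)
    (by
      intro a b
      have hmem : (⟨p (a + b), hp _⟩ : M) = ⟨p a, hp _⟩ + ⟨p b, hp _⟩ := by
        apply Subtype.ext
        show p (a + b) = ((⟨p a, hp _⟩ + ⟨p b, hp _⟩ : M) : L)
        rw [p.map_add]
        rfl
      show φ ⟨p (a + b), hp _⟩ = φ ⟨p a, hp _⟩ + φ ⟨p b, hp _⟩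
      rw [hmem, map_add]) with hφA_def
  have hφA_apply : ∀ x : L, φA x = φ ⟨p x, hp x⟩ := fun x => rfl
  set φ' : L →ₗ[ℤ] ℤ :=
    { toFun := φA
      map_add' := fun a b => by simp
      map_smul' := fun c x => by
        have h := Int.cast_smul_eq_zsmul ℤ c x
        rw [Int.cast_id] at h
        simp only [RingHom.id_apply]
        rw [h, map_zsmul φA c x]
        } with hφ'_def
  obtain ⟨x, hx, -⟩ := hunimod φ'
  refine ⟨x, ?_⟩
  ext m
  have h1 := hx (m : L)
  have h2 : φ' (m : L) = φ m := by
    show φA (m : L) = φ m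
    rw [hφA_apply]
    congr 1
    exact Subtype.ext (hpm m)
  rw [h2] at h1
  rw [restrDual_apply]
  exact h1.symm

/-- Let `L` be an even unimodular lattice, `M ⊂ L` a primitive sublattice with
nondegenerate restricted form, and `N = M^⊥`. Identifying `M^∨` with `Hom(M, ℤ)`
(legitimate since `M` is nondegenerate), the image of `L` in `M^∨/M × N^∨/N` under
`x ↦ (B x|_M mod M, B x|_N mod N)` is the graph of a group isomorphism
`M^∨/M ≅ N^∨/N`. -/
theorem image_of_unimodular_overlattice_is_graph_of_isomorphism
    (L : Type*) [AddCommGroup L] [Module ℤ L] [Module.Free ℤ L] [Module.Finite ℤ L]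
    (B : L →ₗ[ℤ] L →ₗ[ℤ] ℤ)
    (hsymm : ∀ x y : L, B x y = B y x)
    (hunimod : ∀ φ : L →ₗ[ℤ] ℤ, ∃! x : L, ∀ y : L, φ y = B x y)
    (M : Submodule ℤ L)
    (hprim : ∀ (x : L) (k : ℤ), k ≠ 0 → k • x ∈ M → x ∈ M)
    (hMnd : ∀ m : M, (∀ m' : M, B m m' = 0) → m = 0)
    (N : Submodule ℤ L) (hN : N = (LinearMap.BilinForm.orthogonal B M)) :
    ∃ ψ : ((M →ₗ[ℤ] ℤ) ⧸ M.map (restrDual B M)) ≃+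
          ((N →ₗ[ℤ] ℤ) ⧸ N.map (restrDual B N)),
      (∀ x : L,
        Submodule.Quotient.mk (restrDual B N x) =
          ψ (Submodule.Quotient.mk (restrDual B M x))) ∧
      Function.Surjective
        (fun x : L =>
          (Submodule.Quotient.mk (restrDual B M x) :
            (M →ₗ[ℤ] ℤ) ⧸ M.map (restrDual B M))) := by
  classical
  have hBz : ∀ (k : ℤ) (x y : L), B (k • x) y = k * B x y := by
    intro k x y
    rw [← Int.cast_smul_eq_zsmul ℤ k x, B.map_smul, LinearMap.smul_apply, smul_eq_mul,
      Int.cast_id]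
  have hBz2 : ∀ (k : ℤ) (x y : L), B x (k • y) = k * B x y := by
    intro k x y
    rw [← Int.cast_smul_eq_zsmul ℤ k y, (B x).map_smul, smul_eq_mul, Int.cast_id]
  -- membership in the orthogonal complement, via symmetry
  have hmemN : ∀ x : L, x ∈ N ↔ ∀ m ∈ M, B x m = 0 := by
    intro x
    rw [hN]
    constructor
    · intro h m hm; rw [hsymm]; exact h m hm
    · intro h m hm; show B m x = 0; rw [hsymm]; exact h m hm
  -- kernel of restrDual B M is N
  have hkerM : LinearMap.ker (restrDual B M) = N := by
    ext x
    rw [LinearMap.mem_ker, hmemN]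
    constructor
    · intro h m hm
      have := congrArg (fun f => f (⟨m, hm⟩ : M)) h
      simpa [restrDual_apply] using this
    · intro h; ext m; simpa [restrDual_apply] using h m m.2
  -- N is primitive
  have hprimN : ∀ (x : L) (k : ℤ), k ≠ 0 → k • x ∈ N → x ∈ N := by
    intro x k hk hkx
    rw [hmemN] at hkx ⊢
    intro m hm
    have h1 := hkx m hm
    rw [hBz] at h1
    exact (mul_eq_zero.mp h1).resolve_left hk
  -- orthogonality between M and N
  have hMN : ∀ m ∈ M, ∀ n ∈ N, B m n = 0 := by
    intro m hm n hn
    rw [hsymm]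
    exact (hmemN n).mp hn m hm
  -- surjectivity of both projections
  have hsurjM := restrDual_surjective B hunimod M hprim
  have hsurjN := restrDual_surjective B hunimod N hprimN
  -- kernel of restrDual B N
  have hkerN : ∀ x : L, restrDual B N x = 0 ↔ ∀ n ∈ N, B x n = 0 := by
    intro x
    constructor
    · intro h n hn
      have := congrArg (fun f => f (⟨n, hn⟩ : N)) h
      simpa [restrDual_apply] using this
    · intro h; ext n; simpa [restrDual_apply] using h n n.2
  -- instances for ↥M
  haveI : Fintype (Module.Free.ChooseBasisIndex ℤ L) := Module.Free.ChooseBasisIndex.fintype ℤ L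
  obtain ⟨nM, bM⟩ := M.basisOfPid (Module.Free.chooseBasis ℤ L)
  haveI hMfree : Module.Free ℤ M :=
    intModuleEq M.module (AddCommGroup.toIntModule ↥M) ▸
      (@Module.Free.of_basis ℤ ↥M _ M.addCommMonoid M.module _ bM)
  haveI hMfin : Module.Finite ℤ M :=
    intModuleEq M.module (AddCommGroup.toIntModule ↥M) ▸
      (@Module.Finite.of_basis ℤ ↥M _ _ M.addCommMonoid M.module _ bM)
  -- the key approximation: every x has a multiple in M ⊔ N
  have star : ∀ x : L, ∃ k : ℤ, k ≠ 0 ∧ ∃ m ∈ M, k • x - m ∈ N := by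
    intro x
    set g : M →ₗ[ℤ] (M →ₗ[ℤ] ℤ) :=
      (AddMonoidHom.mk' (fun m : M => restrDual B M (m : L))
        (by intro a b; ext w; simp [restrDual_apply])).toIntLinearMap with hg_def
    have hgapp : ∀ (m : M) (w : M), g m w = B (m : L) (w : L) := fun m w => rfl
    have hg : Function.Injective g := by
      intro m m' h
      have h0 : g (m - m') = 0 := by rw [map_sub, h, sub_self]
      have hz : ∀ m'' : M, B ((m - m' : M) : L) (m'' : L) = 0 := by
        intro m''
        have := congrArg (fun f => f m'') h0
        simpa [hgapp] using this
      exact sub_eq_zero.mp (hMnd (m - m') hz)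
    obtain ⟨k, hk, v, hv⟩ := torCoker g hg (restrDual B M x)
    refine ⟨k, hk, v, v.2, ?_⟩
    rw [hmemN]
    intro m hm
    have h1 := hv ⟨m, hm⟩
    rw [restrDual_apply, hgapp] at h1
    rw [B.map_sub, LinearMap.sub_apply, hBz, h1, sub_self]
  -- N is nondegenerate
  have hNnd : ∀ n ∈ N, (∀ n' ∈ N, B n n' = 0) → n = 0 := by
    intro n hn h
    have key : ∀ y : L, B n y = 0 := by
      intro y
      obtain ⟨k, hk, m, hm, hw⟩ := star y
      have h1 : B n (k • y) = 0 := by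
        have he : k • y = m + (k • y - m) := by abel
        rw [he, map_add, hsymm n m, hMN m hm n hn, h _ hw, add_zero]
      rw [hBz2] at h1
      exact (mul_eq_zero.mp h1).resolve_left hk
    obtain ⟨x₀, hx₀, huniq⟩ := hunimod 0
    have e1 : n = x₀ := huniq n (fun y => (key y).symm)
    have e2 : (0 : L) = x₀ := huniq 0 (fun y => by simp)
    rw [e1, ← e2]
  -- the double orthogonal is inside M
  have hbiorth : ∀ x : L, (∀ n ∈ N, B x n = 0) → x ∈ M := by
    intro x hx
    obtain ⟨k, hk, m, hm, hw⟩ := star x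
    have hw0 : k • x - m = 0 := by
      refine hNnd _ hw ?_
      intro n' hn'
      rw [B.map_sub, LinearMap.sub_apply, hBz,
        hx n' hn', hMN m hm n' hn', mul_zero, sub_zero]
    have hkm : k • x = m := by rwa [sub_eq_zero] at hw0
    exact hprim x k hk (hkm ▸ hm)
  -- the two composite maps to the discriminant quotients
  set K : Submodule ℤ L := M ⊔ N with hK_def
  set fM : L →ₗ[ℤ] ((M →ₗ[ℤ] ℤ) ⧸ M.map (restrDual B M)) :=
    (M.map (restrDual B M)).mkQ.comp (restrDual B M) with hfM_def
  set fN : L →ₗ[ℤ] ((N →ₗ[ℤ] ℤ) ⧸ N.map (restrDual B N)) :=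
    (N.map (restrDual B N)).mkQ.comp (restrDual B N) with hfN_def
  have hfM_surj : Function.Surjective fM := by
    rw [hfM_def]
    exact (Submodule.mkQ_surjective _).comp hsurjM
  have hfN_surj : Function.Surjective fN := by
    rw [hfN_def]
    exact (Submodule.mkQ_surjective _).comp hsurjN
  have hfM_ker : LinearMap.ker fM = K := by
    ext x
    rw [LinearMap.mem_ker, hfM_def, LinearMap.comp_apply, Submodule.mkQ_apply,
      Submodule.Quotient.mk_eq_zero]
    constructor
    · intro h
      obtain ⟨m, hm, heq⟩ := Submodule.mem_map.mp h
      have hx : x - m ∈ N := by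
        rw [← hkerM, LinearMap.mem_ker, (restrDual B M).map_sub, heq, sub_self]
      have he : x = m + (x - m) := by abel
      rw [hK_def, he]
      exact Submodule.add_mem_sup hm hx
    · intro hx
      rw [hK_def] at hx
      obtain ⟨m, hm, n, hn, rfl⟩ := Submodule.mem_sup.mp hx
      refine Submodule.mem_map.mpr ⟨m, hm, ?_⟩
      rw [map_add]
      have hz : restrDual B M n = 0 := by rw [← LinearMap.mem_ker, hkerM]; exact hn
      rw [hz, add_zero]
  have hfN_ker : LinearMap.ker fN = K := by
    ext x
    rw [LinearMap.mem_ker, hfN_def, LinearMap.comp_apply, Submodule.mkQ_apply,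
      Submodule.Quotient.mk_eq_zero]
    constructor
    · intro h
      obtain ⟨n, hn, heq⟩ := Submodule.mem_map.mp h
      have hx : ∀ n' ∈ N, B (x - n) n' = 0 := by
        intro n' hn'
        have h0 : restrDual B N (x - n) = 0 := by
          rw [(restrDual B N).map_sub, heq, sub_self]
        exact (hkerN _).mp h0 n' hn'
      have hxM : x - n ∈ M := hbiorth _ hx
      have he : x = (x - n) + n := by abel
      rw [hK_def, he]
      exact Submodule.add_mem_sup hxM hn
    · intro hx
      rw [hK_def] at hx
      obtain ⟨m, hm, n, hn, rfl⟩ := Submodule.mem_sup.mp hx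
      have h0 : restrDual B N m = 0 := by
        rw [hkerN]
        intro n' hn'
        exact hMN m hm n' hn'
      rw [map_add, h0, zero_add]
      exact Submodule.mem_map.mpr ⟨n, hn, rfl⟩
  -- build the isomorphisms L/K ≃ QM and L/K ≃ QN
  have hleM : K ≤ LinearMap.ker fM := hfM_ker.ge
  have hleN : K ≤ LinearMap.ker fN := hfN_ker.ge
  letI instK : Module ℤ (L ⧸ K) := Submodule.Quotient.module K
  set eM := LinearEquiv.ofBijective (Submodule.liftQ K fM hleM)
    ⟨by rw [← LinearMap.ker_eq_bot]; exact Submodule.ker_liftQ_eq_bot K fM hleM hfM_ker.le,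
     fun q => by
      obtain ⟨x, hx⟩ := hfM_surj q
      exact ⟨Submodule.Quotient.mk x, by rwa [Submodule.liftQ_apply]⟩⟩ with heM_def
  set eN := LinearEquiv.ofBijective (Submodule.liftQ K fN hleN)
    ⟨by rw [← LinearMap.ker_eq_bot]; exact Submodule.ker_liftQ_eq_bot K fN hleN hfN_ker.le,
     fun q => by
      obtain ⟨x, hx⟩ := hfN_surj q
      exact ⟨Submodule.Quotient.mk x, by rwa [Submodule.liftQ_apply]⟩⟩ with heN_def
  refine ⟨(eM.symm ≪≫ₗ eN).toAddEquiv, ?_, ?_⟩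
  · intro x
    have hMx : eM (Submodule.Quotient.mk x) = Submodule.Quotient.mk (restrDual B M x) := by
      show Submodule.liftQ K fM hleM (Submodule.Quotient.mk x) = _
      rw [Submodule.liftQ_apply, hfM_def]
      rfl
    have hNx : eN (Submodule.Quotient.mk x) = Submodule.Quotient.mk (restrDual B N x) := by
      show Submodule.liftQ K fN hleN (Submodule.Quotient.mk x) = _
      rw [Submodule.liftQ_apply, hfN_def]
      rfl
    show Submodule.Quotient.mk (restrDual B N x) =
      eN (eM.symm (Submodule.Quotient.mk (restrDual B M x)))
    rw [← hMx, LinearEquiv.symm_apply_apply, hNx]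
  · intro q
    obtain ⟨x, hx⟩ := hfM_surj q
    refine ⟨x, ?_⟩
    rw [hfM_def] at hx
    exact hx
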